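/- Let P ↷ I be a group action and cl an invariant closure operator on I. Suppose for any finite C ⊆ I and a, b ∈ I with a ∉ cl(C): (a) there is some a' ≅_C a with {a'} ⫫_C {a}, and (b) there is some a' ≅_C a with a' ∉ cl({b} ∪ C). Then for any finite C ⊆ I and a, b ∈ I, there is some a' ≅_C a with {a'} ⫫_C {b}. -/
import Mathlib


/-- A closure operator on a set (type) `I`. -/
structure IsClosureOp {I : Type*} (cl : Set I → Set I) : Prop where
  extensive : ∀ A, A ⊆ cl A
  mono : ∀ A B : Set I, A ⊆ B → cl A ⊆ cl B
  idem : ∀ A, cl (cl A) = cl A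

/-- The independence relation derived from `cl`: `A ⫫_C B`. -/
def Indep {I : Type*} (cl : Set I → Set I) (A C B : Set I) : Prop :=
  A ∩ cl (B ∪ C) ⊆ cl C ∧ B ∩ cl (A ∪ C) ⊆ cl C

/-- `b` is minimal in `B` over `C` (with respect to `cl`). -/
def MinimalOver {I : Type*} (cl : Set I → Set I) (B C : Set I) (b : I) : Prop :=
  b ∈ B \ cl C ∧ ∀ b' ∈ (B ∩ cl (insert b C)) \ cl C, b ∈ cl (insert b' C)


/-- `a' ≅_C a`: some `π ∈ P` fixes `C` pointwise and sends `a` to `a'`. -/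
def ConjOver (P : Type*) [Group P] {I : Type*} [MulAction P I] (C : Set I) (a a' : I) : Prop :=
  ∃ π : P, (∀ c ∈ C, π • c = c) ∧ π • a = a'

/-- `A' ≅_C A` for sets: some `π ∈ P` fixes `C` pointwise with `π[A] = A'`. -/
def ConjSetOver (P : Type*) [Group P] {I : Type*} [MulAction P I] (C A A' : Set I) : Prop :=
  ∃ π : P, (∀ c ∈ C, π • c = c) ∧ (fun x => π • x) '' A = A'

/-- `cl` is invariant under the action of `P`: `π[cl A] = cl (π[A])`. -/
def ClInvariant (P : Type*) [Group P] {I : Type*} [MulAction P I] (cl : Set I → Set I) : Prop :=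
  ∀ (π : P) (A : Set I), (fun x => π • x) '' cl A = cl ((fun x => π • x) '' A)

section Aux

variable {P : Type*} [Group P] {I : Type*} [MulAction P I]

lemma aux_image_fix {C : Set I} {π : P} (hπ : ∀ c ∈ C, π • c = c) :
    (fun x => π • x) '' C = C := by
  ext z
  constructor
  · rintro ⟨w, hw, rfl⟩
    simpa [hπ w hw] using hw
  · intro hz
    exact ⟨z, hz, hπ z hz⟩

lemma aux_smul_mem_cl {cl : Set I → Set I} (hinv : ClInvariant P cl)
    (π : P) {S : Set I} {x : I} :
    π • x ∈ cl ((fun y => π • y) '' S) ↔ x ∈ cl S := by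
  rw [← hinv]
  constructor
  · rintro ⟨w, hw, hwx⟩
    have hwxe : w = x := MulAction.injective π hwx
    rwa [← hwxe]
  · intro hx
    exact ⟨x, hx, rfl⟩

lemma aux_mem_cl_insert {cl : Set I → Set I} (hinv : ClInvariant P cl)
    {C : Set I} {π : P} (hπ : ∀ c ∈ C, π • c = c) (s x : I) :
    π • x ∈ cl (insert (π • s) C) ↔ x ∈ cl (insert s C) := by
  have himg : (fun y => π • y) '' insert s C = insert (π • s) C := by
    rw [Set.image_insert_eq, aux_image_fix hπ]
  rw [← himg, aux_smul_mem_cl hinv]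

lemma aux_mem_clC {cl : Set I → Set I} (hinv : ClInvariant P cl)
    {C : Set I} {π : P} (hπ : ∀ c ∈ C, π • c = c) (x : I) :
    π • x ∈ cl C ↔ x ∈ cl C := by
  conv_lhs => rw [← aux_image_fix hπ]
  exact aux_smul_mem_cl hinv π

lemma aux_inv_fix {C : Set I} {π : P} (hπ : ∀ c ∈ C, π • c = c) :
    ∀ c ∈ C, π⁻¹ • c = c := by
  intro c hc
  rw [inv_smul_eq_iff]
  exact (hπ c hc).symm

end Aux

/-- (4) ⇒ (3) in the characterization of disjointifying closure operators. -/
theorem stmt_7 {P : Type*} [Group P] {I : Type*} [MulAction P I]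
    (cl : Set I → Set I) (hcl : IsClosureOp cl) (hinv : ClInvariant P cl)
    (h : ∀ C : Set I, C.Finite → ∀ a b : I, a ∉ cl C →
      (∃ a', ConjOver P C a a' ∧ Indep cl {a'} C {a}) ∧
      (∃ a', ConjOver P C a a' ∧ a' ∉ cl (insert b C))) :
    ∀ C : Set I, C.Finite → ∀ a b : I,
      ∃ a', ConjOver P C a a' ∧ Indep cl {a'} C {b} := by
  obtain ⟨hext, hmono, hidem⟩ := hcl
  intro C hC a b
  have triv_conj : ∀ x : I, ConjOver P C x x :=
    fun x => ⟨1, fun c _ => one_smul P c, one_smul P x⟩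
  -- a useful monotonicity fact: if s ∈ cl T then cl (insert s T) ⊆ cl T ... stated for our use
  have cl_insert_le : ∀ (s : I) (T : Set I), s ∈ cl T → cl (insert s T) ⊆ cl T := by
    intro s T hs
    have hsub : insert s T ⊆ cl T := Set.insert_subset hs (hext T)
    have := hmono _ _ hsub
    rwa [hidem] at this
  by_cases hb : b ∈ cl C
  · refine ⟨a, triv_conj a, ?_, ?_⟩
    · rintro x ⟨hx1, hx2⟩
      rw [Set.singleton_union] at hx2
      exact cl_insert_le b C hb hx2
    · rintro x ⟨hx1, hx2⟩
      rw [Set.mem_singleton_iff] at hx1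
      subst hx1
      exact hb
  by_cases ha : a ∈ cl C
  · refine ⟨a, triv_conj a, ?_, ?_⟩
    · rintro x ⟨hx1, hx2⟩
      rw [Set.mem_singleton_iff] at hx1
      subst hx1
      exact ha
    · rintro x ⟨hx1, hx2⟩
      rw [Set.singleton_union] at hx2
      exact cl_insert_le a C ha hx2
  -- main case: a ∉ cl C, b ∉ cl C
  by_contra hcon
  push_neg at hcon
  -- conjugates of a are outside cl C
  have conj_a_notin : ∀ x, ConjOver P C a x → x ∉ cl C := by
    rintro x ⟨π, hπ, rfl⟩
    rw [aux_mem_clC hinv hπ]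
    exact ha
  have conj_b_notin : ∀ y, ConjOver P C b y → y ∉ cl C := by
    rintro y ⟨π, hπ, rfl⟩
    rw [aux_mem_clC hinv hπ]
    exact hb
  -- the key dichotomy (**): any conjugate of a and any conjugate of b are cl-comparable
  have star : ∀ x y, ConjOver P C a x → ConjOver P C b y →
      x ∈ cl (insert y C) ∨ y ∈ cl (insert x C) := by
    rintro x y hx ⟨ρ, hρ, rfl⟩
    have hρinv := aux_inv_fix hρ
    have hx' : ConjOver P C a (ρ⁻¹ • x) := by
      obtain ⟨π, hπ, rfl⟩ := hx
      refine ⟨ρ⁻¹ * π, fun c hc => ?_, by rw [mul_smul]⟩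
      rw [mul_smul, hπ c hc, hρinv c hc]
    have hni := hcon _ hx'
    rw [Indep, not_and_or] at hni
    have hdis : (ρ⁻¹ • x) ∈ cl (insert b C) ∨ b ∈ cl (insert (ρ⁻¹ • x) C) := by
      rcases hni with hni | hni
      · left
        obtain ⟨z, hz, hznin⟩ := Set.not_subset.mp hni
        obtain ⟨hz1, hz2⟩ := hz
        rw [Set.mem_singleton_iff] at hz1
        subst hz1
        rwa [Set.singleton_union] at hz2
      · right
        obtain ⟨z, hz, hznin⟩ := Set.not_subset.mp hni
        obtain ⟨hz1, hz2⟩ := hz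
        rw [Set.mem_singleton_iff] at hz1
        subst hz1
        rwa [Set.singleton_union] at hz2
    rcases hdis with hd | hd
    · left
      have := (aux_mem_cl_insert hinv hρ b (ρ⁻¹ • x)).mpr hd
      rwa [smul_inv_smul] at this
    · right
      have := (aux_mem_cl_insert hinv hρ (ρ⁻¹ • x) b).mpr hd
      rwa [smul_inv_smul] at this
  -- Step 5: an independent conjugate x* of a over C
  obtain ⟨xs, hxs_conj, hxs_ind⟩ := (h C hC a a ha).1
  have hxs_notinC : xs ∉ cl C := conj_a_notin xs hxs_conj
  have h5a : xs ∉ cl (insert a C) := by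
    intro hmem
    exact hxs_notinC (hxs_ind.1 ⟨rfl, by rwa [Set.singleton_union]⟩)
  have h5b : a ∉ cl (insert xs C) := by
    intro hmem
    exact ha (hxs_ind.2 ⟨rfl, by rwa [Set.singleton_union]⟩)
  -- Step 6: a conjugate y of b with y ∉ cl (insert a C); then a ∈ cl (insert y C)
  obtain ⟨y, hy_conj, hy_nin⟩ := (h C hC b a hb).2
  have hay : a ∈ cl (insert y C) := by
    rcases star a y (triv_conj a) hy_conj with hd | hd
    · exact hd
    · exact absurd hd hy_nin
  -- Step 7: over C' = insert a C, a conjugate x' of xs avoiding cl (insert y C')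
  have hC' : (insert a C).Finite := hC.insert a
  obtain ⟨x', hx'_conj', hx'_nin⟩ := (h (insert a C) hC' xs y h5a).2
  obtain ⟨σ, hσ, hσx⟩ := hx'_conj'
  have hσC : ∀ c ∈ C, σ • c = c := fun c hc => hσ c (Set.mem_insert_of_mem _ hc)
  have hσa : σ • a = a := hσ a (Set.mem_insert _ _)
  have hx'_conj : ConjOver P C a x' := by
    obtain ⟨π, hπ, hπa⟩ := hxs_conj
    exact ⟨σ * π, fun c hc => by rw [mul_smul, hπ c hc, hσC c hc],
      by rw [mul_smul, hπa, hσx]⟩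
  -- Step 8: x' ∉ cl (insert y C)
  have hx'y : x' ∉ cl (insert y C) := by
    intro hm
    exact hx'_nin (hmono _ _ (Set.insert_subset_insert (Set.subset_insert a C)) hm)
  -- Step 9: hence y ∈ cl (insert x' C)
  have hyx' : y ∈ cl (insert x' C) := (star x' y hx'_conj hy_conj).resolve_left hx'y
  -- Step 10: pull back by σ⁻¹ : y2 := σ⁻¹ • y ∈ cl (insert xs C)
  have hσCinv := aux_inv_fix hσC
  have hy2 : σ⁻¹ • y ∈ cl (insert xs C) := by
    have := (aux_mem_cl_insert hinv hσCinv x' y).mpr hyx'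
    rwa [show σ⁻¹ • x' = xs by rw [← hσx, inv_smul_smul]] at this
  have hy2_conj : ConjOver P C b (σ⁻¹ • y) := by
    obtain ⟨ρ, hρ, hρb⟩ := hy_conj
    refine ⟨σ⁻¹ * ρ, fun c hc => ?_, by rw [mul_smul, hρb]⟩
    rw [mul_smul, hρ c hc, hσCinv c hc]
  -- Step 11: y2 ∈ cl (insert a C)
  have h11 : σ⁻¹ • y ∈ cl (insert a C) := by
    rcases star a (σ⁻¹ • y) (triv_conj a) hy2_conj with hd | hd
    · exfalso
      apply h5b
      have hsub : insert (σ⁻¹ • y) C ⊆ cl (insert xs C) :=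
        Set.insert_subset hy2 ((Set.subset_insert xs C).trans (hext _))
      have hsub' := hmono _ _ hsub
      rw [hidem] at hsub'
      exact hsub' hd
    · exact hd
  -- Step 12: push forward by σ; contradiction with hy_nin
  have hfin : y ∈ cl (insert a C) := by
    have := (aux_mem_cl_insert hinv hσC a (σ⁻¹ • y)).mpr h11
    rwa [hσa, smul_inv_smul] at this
  exact hy_nin hfin
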